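/- The pair (H,G), with G acting on H by g·h = h∘g⁻¹, is small: for every n < ω there are only countably many orbits on Hⁿ under the diagonal action of G; equivalently, for every finite subset A ⊆ H there are only countably many orbits on H under the pointwise stabilizer G_A. -/

import Mathlib

open scoped ENNReal

/-- The weight of a point `(i,j) ∈ ℕ × ℕ`: `2 · 3^{-(i+1)}`. -/
noncomputable def wt (p : ℕ × ℕ) : ℝ≥0∞ := 2 * ((3 : ℝ≥0∞) ^ (p.1 + 1))⁻¹

/-- `‖S‖ = Σ_{(i,j) ∈ S} 2 · 3^{-(i+1)} ∈ [0,∞]` for `S ⊆ ℕ × ℕ`. -/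
noncomputable def nrmS (S : Set (ℕ × ℕ)) : ℝ≥0∞ := ∑' p, S.indicator wt p

lemma nrmS_mono {S T : Set (ℕ × ℕ)} (h : S ⊆ T) : nrmS S ≤ nrmS T :=
  ENNReal.tsum_le_tsum fun p =>
    Set.indicator_le_indicator_of_subset h (fun _ => zero_le) p

lemma nrmS_union_le (S T : Set (ℕ × ℕ)) : nrmS (S ∪ T) ≤ nrmS S + nrmS T := by
  rw [nrmS, nrmS, nrmS, ← ENNReal.tsum_add]
  refine ENNReal.tsum_le_tsum fun p => ?_
  by_cases hS : p ∈ S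
  · refine le_trans ?_ (le_add_right le_rfl)
    rw [Set.indicator_of_mem (Set.mem_union_left _ hS), Set.indicator_of_mem hS]
  · by_cases hT : p ∈ T
    · refine le_trans ?_ (le_add_left le_rfl)
      rw [Set.indicator_of_mem (Set.mem_union_right _ hT), Set.indicator_of_mem hT]
    · rw [Set.indicator_of_notMem (fun hc => hc.elim hS hT)]
      exact zero_le

lemma nrmS_empty : nrmS ∅ = 0 := by simp [nrmS]

/-- The support of `z : ℕ × ℕ → ZMod 2`. -/
def suppZ (z : ℕ × ℕ → ZMod 2) : Set (ℕ × ℕ) := {p | z p = 1}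

/-- `‖z‖` for `z : ℕ × ℕ → ZMod 2`. -/
noncomputable def nrmZ (z : ℕ × ℕ → ZMod 2) : ℝ≥0∞ := nrmS (suppZ z)

/-- `H = {z : ℕ × ℕ → ZMod 2 | ‖z‖ < ∞}`, as an (additive) subgroup of the product group
`ℕ × ℕ → ZMod 2` with pointwise addition mod 2. -/
noncomputable def Hgrp : AddSubgroup ((ℕ × ℕ) → ZMod 2) where
  carrier := {z | nrmZ z < ⊤}
  zero_mem' := by
    have h : suppZ 0 = ∅ := by ext p; simp [suppZ]
    simp [nrmZ, h, nrmS_empty]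
  add_mem' {z w} hz hw := by
    have hsub : suppZ (z + w) ⊆ suppZ z ∪ suppZ w := by
      intro p hp
      by_contra hc
      simp only [Set.mem_union, suppZ, Set.mem_setOf_eq, not_or] at hc
      have hdi : ∀ x : ZMod 2, x = 0 ∨ x = 1 := by decide
      have hz0 : z p = 0 := (hdi (z p)).resolve_right hc.1
      have hw0 : w p = 0 := (hdi (w p)).resolve_right hc.2
      have hp' : (z + w) p = 1 := hp
      rw [Pi.add_apply, hz0, hw0] at hp'
      exact absurd hp' (by decide)
    calc nrmZ (z + w) ≤ nrmS (suppZ z ∪ suppZ w) := nrmS_mono hsub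
      _ ≤ nrmZ z + nrmZ w := nrmS_union_le _ _
      _ < ⊤ := ENNReal.add_lt_top.2 ⟨hz, hw⟩
  neg_mem' {z} hz := by
    have h : suppZ (-z) = suppZ z := by
      ext p; simp [suppZ, CharTwo.neg_eq]
    simpa [nrmZ, h] using hz
/-- `φ(x) = Σ_i 2 · x i · 3^{-(i+1)}`, the standard map from `2^ℕ` onto the ternary Cantor
set (values of `x` read as `0, 1` in `ℝ`). -/
noncomputable def phiC (x : ℕ → ZMod 2) : ℝ :=
  ∑' i, 2 * ((x i).val : ℝ) * ((3 : ℝ) ^ (i + 1))⁻¹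

/-- The metric on `H`: `d_H(z,w) = Σ_j |φ(z(·,j)) − φ(w(·,j))|`, the `ℓ¹`-distance between
the corresponding points of `C^ℕ ∩ ℓ¹`. -/
noncomputable def dH (z w : ↥Hgrp) : ℝ :=
  ∑' j, |phiC (fun i => (z : (ℕ × ℕ) → ZMod 2) (i, j)) -
          phiC (fun i => (w : (ℕ × ℕ) → ZMod 2) (i, j))|

/-- The support of a permutation `g` of `ℕ × ℕ`. -/
def suppP (g : Equiv.Perm (ℕ × ℕ)) : Set (ℕ × ℕ) := {p | g p ≠ p}

lemma suppP_inv (g : Equiv.Perm (ℕ × ℕ)) : suppP g⁻¹ = suppP g := by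
  ext p
  simp only [suppP, Set.mem_setOf_eq, ne_eq]
  constructor
  · intro h hc
    exact h (by conv_lhs => rw [← hc]; rw [← Equiv.Perm.mul_apply, inv_mul_cancel, Equiv.Perm.one_apply] ; )
  · intro h hc
    exact h (by conv_lhs => rw [← hc]; rw [← Equiv.Perm.mul_apply, mul_inv_cancel, Equiv.Perm.one_apply])

/-- `G = {g ∈ Sym(ℕ × ℕ) | ‖supp g‖ < ∞}`, as a subgroup of the symmetric group of
`ℕ × ℕ`. -/
noncomputable def Ggrp : Subgroup (Equiv.Perm (ℕ × ℕ)) where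
  carrier := {g | nrmS (suppP g) < ⊤}
  one_mem' := by
    have h : suppP 1 = ∅ := by ext p; simp [suppP]
    simp [h, nrmS_empty]
  mul_mem' {f g} hf hg := by
    have hsub : suppP (f * g) ⊆ suppP f ∪ suppP g := by
      intro p hp
      by_contra hc
      simp only [Set.mem_union, suppP, Set.mem_setOf_eq, ne_eq, not_or, not_not] at hc
      exact hp (by simp only [suppP, Set.mem_setOf_eq, Equiv.Perm.mul_apply, hc.2, hc.1] at *)
    calc nrmS (suppP (f * g)) ≤ nrmS (suppP f ∪ suppP g) := nrmS_mono hsub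
      _ ≤ nrmS (suppP f) + nrmS (suppP g) := nrmS_union_le _ _
      _ < ⊤ := ENNReal.add_lt_top.2 ⟨hf, hg⟩
  inv_mem' {g} hg := by simpa [suppP_inv] using hg

/-- The metric on `G`: `d(f,g) = ‖supp (f⁻¹ ∘ g)‖`. -/
noncomputable def dG (f g : ↥Ggrp) : ℝ :=
  (nrmS (suppP ((f : Equiv.Perm (ℕ × ℕ))⁻¹ * (g : Equiv.Perm (ℕ × ℕ))))).toReal

/-- The action of `G` on `H`: `g • h = h ∘ g⁻¹`. -/
noncomputable def actGH (g : ↥Ggrp) (h : ↥Hgrp) : ↥Hgrp :=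
  ⟨fun p => (h : (ℕ × ℕ) → ZMod 2) (((g : Equiv.Perm (ℕ × ℕ)))⁻¹ p), by
    have hsub : suppZ (fun p => (h : (ℕ × ℕ) → ZMod 2) (((g : Equiv.Perm (ℕ × ℕ)))⁻¹ p)) ⊆
        suppZ (h : (ℕ × ℕ) → ZMod 2) ∪ suppP (g : Equiv.Perm (ℕ × ℕ)) := by
      intro p hp
      by_cases hgp : ((g : Equiv.Perm (ℕ × ℕ)))⁻¹ p = p
      · left
        have : (h : (ℕ × ℕ) → ZMod 2) (((g : Equiv.Perm (ℕ × ℕ)))⁻¹ p) = 1 := hp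
        rwa [hgp] at this
      · right
        have : p ∈ suppP ((g : Equiv.Perm (ℕ × ℕ)))⁻¹ := hgp
        rwa [suppP_inv] at this
    show nrmZ _ < ⊤
    calc nrmZ _ ≤ nrmS (suppZ (h : (ℕ × ℕ) → ZMod 2) ∪ suppP (g : Equiv.Perm (ℕ × ℕ))) :=
          nrmS_mono hsub
      _ ≤ nrmZ (h : (ℕ × ℕ) → ZMod 2) + nrmS (suppP (g : Equiv.Perm (ℕ × ℕ))) :=
          nrmS_union_le _ _
      _ < ⊤ := ENNReal.add_lt_top.2 ⟨h.2, g.2⟩⟩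


section SmallAux

open scoped ENNReal

lemma nrmS_union_lt_top {S T : Set (ℕ × ℕ)} (hS : nrmS S < ⊤) (hT : nrmS T < ⊤) :
    nrmS (S ∪ T) < ⊤ :=
  lt_of_le_of_lt (nrmS_union_le S T) (ENNReal.add_lt_top.2 ⟨hS, hT⟩)

lemma wt_pos (p : ℕ × ℕ) : wt p ≠ 0 := by
  simp only [wt, ne_eq, mul_eq_zero, ENNReal.inv_eq_zero, not_or]
  exact ⟨by norm_num, ENNReal.pow_ne_top (by norm_num)⟩

lemma row_finite {S : Set (ℕ × ℕ)} (hS : nrmS S < ⊤) (i : ℕ) : {j | (i, j) ∈ S}.Finite := by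
  have hfin : {p : ℕ × ℕ | wt (i, 0) ≤ S.indicator wt p}.Finite :=
    ENNReal.finite_const_le_of_tsum_ne_top hS.ne (wt_pos (i, 0))
  have hsub : {j | (i, j) ∈ S} ⊆
      (fun j => ((i, j) : ℕ × ℕ)) ⁻¹' {p | wt (i, 0) ≤ S.indicator wt p} := by
    intro j hj
    have hj' : ((i, j) : ℕ × ℕ) ∈ S := hj
    simp only [Set.mem_preimage, Set.mem_setOf_eq, Set.indicator_of_mem hj']
    exact le_of_eq rfl
  exact ((hfin.preimage (fun a _ b _ hab => congrArg Prod.snd hab)).subset hsub)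

lemma nrmS_range_lt_top (jf : ℕ → ℕ) : nrmS (Set.range fun i => ((i, jf i) : ℕ × ℕ)) < ⊤ := by
  have hinj : Function.Injective (fun i => ((i, jf i) : ℕ × ℕ)) :=
    fun a b hab => congrArg Prod.fst hab
  rw [nrmS, ← tsum_subtype, ← (Equiv.ofInjective _ hinj).tsum_eq]
  have : ∀ i : ℕ, wt ((Equiv.ofInjective _ hinj i : ℕ × ℕ)) = 2 * ((3:ℝ≥0∞)⁻¹)^(i+1) := by
    intro i
    simp [wt, Equiv.ofInjective_apply, ENNReal.inv_pow]
  rw [tsum_congr this, ENNReal.tsum_mul_left, ENNReal.tsum_geometric_add_one]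
  refine ENNReal.mul_lt_top (by norm_num) (ENNReal.mul_lt_top (by simp) ?_)
  rw [ENNReal.inv_lt_top]
  simp [tsub_pos_iff_lt, ENNReal.inv_lt_one]

/-- The pattern of a tuple of elements of `H` at a point. -/
def patt {ι : Type} (v : ι → ↥Hgrp) (p : ℕ × ℕ) : ι → ZMod 2 :=
  fun i => (v i : (ℕ × ℕ) → ZMod 2) p

/-- The countable invariant of a tuple: the (extended) number of points with each pattern. -/
noncomputable def invar {ι : Type} (v : ι → ↥Hgrp) : (ι → ZMod 2) → ℕ∞ :=
  fun s => Cardinal.toENat (Cardinal.mk {p : ℕ × ℕ // patt v p = s})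

lemma nrmS_patt_ne_lt_top {ι : Type} [Fintype ι] (v : ι → ↥Hgrp) :
    nrmS {p | patt v p ≠ 0} < ⊤ := by
  classical
  have hsub : {p | patt v p ≠ 0} ⊆ ⋃ i ∈ (Finset.univ : Finset ι), suppZ (v i : (ℕ × ℕ) → ZMod 2) := by
    intro p hp
    have : ∃ i, patt v p i ≠ 0 := by
      by_contra hc
      push_neg at hc
      exact hp (funext hc)
    obtain ⟨i, hi⟩ := this
    have hz : ∀ x : ZMod 2, x ≠ 0 → x = 1 := by decide
    have : (v i : (ℕ × ℕ) → ZMod 2) p = 1 := hz _ hi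
    exact Set.mem_biUnion (Finset.mem_univ i) this
  refine lt_of_le_of_lt (nrmS_mono hsub) ?_
  have : ∀ t : Finset ι,
      nrmS (⋃ i ∈ t, suppZ (v i : (ℕ × ℕ) → ZMod 2)) < ⊤ := by
    intro t
    induction t using Finset.induction_on with
    | empty => simp [nrmS_empty]
    | insert _ _ ha ih =>
        rw [Finset.set_biUnion_insert]
        exact nrmS_union_lt_top (v _).2 ih
  exact this Finset.univ

/-- The key lemma: tuples with the same invariant are in the same diagonal `G`-orbit. -/
lemma exists_g {ι : Type} [Fintype ι] (v w : ι → ↥Hgrp) (hinv : invar v = invar w) :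
    ∃ g : ↥Ggrp, ∀ i, actGH g (v i) = w i := by
  classical
  set U := {p : ℕ × ℕ | patt v p ≠ 0} with hUdef
  set V := {p : ℕ × ℕ | patt w p ≠ 0} with hVdef
  have hU : nrmS U < ⊤ := nrmS_patt_ne_lt_top v
  have hV : nrmS V < ⊤ := nrmS_patt_ne_lt_top w
  have hUV : nrmS (U ∪ V) < ⊤ := nrmS_union_lt_top hU hV
  have hchoice : ∀ i : ℕ, ∃ j, (i, j) ∉ U ∪ V := by
    intro i
    have h1 : {j | (i, j) ∈ U ∪ V}.Finite := row_finite hUV i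
    obtain ⟨j, hj⟩ := h1.infinite_compl.nonempty
    exact ⟨j, hj⟩
  choose jf hjf using hchoice
  set D := Set.range (fun i : ℕ => ((i, jf i) : ℕ × ℕ)) with hDdef
  have hD : nrmS D < ⊤ := nrmS_range_lt_top jf
  set W : Set (ℕ × ℕ) := (U ∪ V) ∪ D with hWdef
  have hW : nrmS W < ⊤ := nrmS_union_lt_top hUV hD
  have hvzero : ∀ p ∉ W, patt v p = 0 := by
    intro p hp
    by_contra hc
    exact hp (Or.inl (Or.inl hc))
  have hwzero : ∀ p ∉ W, patt w p = 0 := by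
    intro p hp
    by_contra hc
    exact hp (Or.inl (Or.inr hc))
  have hDv : ∀ i : ℕ, patt v (i, jf i) = 0 := by
    intro i
    by_contra hc
    exact hjf i (Or.inl hc)
  have hDw : ∀ i : ℕ, patt w (i, jf i) = 0 := by
    intro i
    by_contra hc
    exact hjf i (Or.inr hc)
  have hDW : ∀ i : ℕ, ((i, jf i) : ℕ × ℕ) ∈ W := fun i => Or.inr ⟨i, rfl⟩
  -- fibers over `W` are equinumerous
  have hfib : ∀ s : ι → ZMod 2,
      Nonempty ({x : ↥W // patt v x.1 = s} ≃ {x : ↥W // patt w x.1 = s}) := by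
    intro s
    by_cases hs : s = 0
    · subst hs
      have h1 : Infinite {x : ↥W // patt v x.1 = 0} :=
        Infinite.of_injective (fun i : ℕ => (⟨⟨(i, jf i), hDW i⟩, hDv i⟩ :
            {x : ↥W // patt v x.1 = 0}))
          (fun a b hab => congrArg Prod.fst (congrArg Subtype.val (congrArg Subtype.val hab)))
      have h2 : Infinite {x : ↥W // patt w x.1 = 0} :=
        Infinite.of_injective (fun i : ℕ => (⟨⟨(i, jf i), hDW i⟩, hDw i⟩ :
            {x : ↥W // patt w x.1 = 0}))
          (fun a b hab => congrArg Prod.fst (congrArg Subtype.val (congrArg Subtype.val hab)))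
      exact nonempty_equiv_of_countable
    · have e1 : {x : ↥W // patt v x.1 = s} ≃ {p : ℕ × ℕ // patt v p = s} :=
        @Equiv.subtypeSubtypeEquivSubtype (ℕ × ℕ) (· ∈ W) (fun p => patt v p = s)
          (fun {p} hp => Or.inl (Or.inl (show patt v p ≠ 0 by rw [hp]; exact hs)))
      have e2 : {x : ↥W // patt w x.1 = s} ≃ {p : ℕ × ℕ // patt w p = s} :=
        @Equiv.subtypeSubtypeEquivSubtype (ℕ × ℕ) (· ∈ W) (fun p => patt w p = s)
          (fun {p} hp => Or.inl (Or.inr (show patt w p ≠ 0 by rw [hp]; exact hs)))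
      have hmk : Cardinal.mk {p : ℕ × ℕ // patt v p = s} =
          Cardinal.mk {p : ℕ × ℕ // patt w p = s} := by
        have := congrFun hinv s
        exact (Cardinal.toENat_eq_iff_of_le_aleph0 Cardinal.mk_le_aleph0
          Cardinal.mk_le_aleph0).mp this
      obtain ⟨e3⟩ := Cardinal.eq.mp hmk
      exact ⟨e1.trans (e3.trans e2.symm)⟩
  let π : ↥W ≃ ↥W := Equiv.ofFiberEquiv (fun s => (hfib s).some)
  have hπ : ∀ x : ↥W, patt w (π x).1 = patt v x.1 := fun x =>
    Equiv.ofFiberEquiv_map (f := fun x : ↥W => patt v x.1) (g := fun x : ↥W => patt w x.1)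
      (fun s => (hfib s).some) x
  let g0 : Equiv.Perm (ℕ × ℕ) := Equiv.Perm.extendDomain π (Equiv.refl ↥W)
  have hg0_not : ∀ p ∉ W, g0 p = p := fun p hp =>
    Equiv.Perm.extendDomain_apply_not_subtype π (Equiv.refl ↥W) hp
  have hg0inv : g0⁻¹ = Equiv.Perm.extendDomain π⁻¹ (Equiv.refl ↥W) :=
    Equiv.Perm.extendDomain_inv π (Equiv.refl ↥W)
  have hg0inv_mem : ∀ p (hp : p ∈ W), g0⁻¹ p = (π.symm ⟨p, hp⟩).1 := by
    intro p hp
    rw [hg0inv]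
    rw [Equiv.Perm.extendDomain_apply_subtype _ (Equiv.refl ↥W) hp]
    rfl
  have hg0inv_not : ∀ p ∉ W, g0⁻¹ p = p := by
    intro p hp
    rw [hg0inv]
    exact Equiv.Perm.extendDomain_apply_not_subtype _ (Equiv.refl ↥W) hp
  have hg0G : g0 ∈ Ggrp := by
    have hsub : suppP g0 ⊆ W := by
      intro p hp
      by_contra hc
      exact hp (hg0_not p hc)
    exact lt_of_le_of_lt (nrmS_mono hsub) hW
  refine ⟨⟨g0, hg0G⟩, ?_⟩
  have key : ∀ p : ℕ × ℕ, patt v (g0⁻¹ p) = patt w p := by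
    intro p
    by_cases hp : p ∈ W
    · rw [hg0inv_mem p hp]
      have := hπ (π.symm ⟨p, hp⟩)
      rw [Equiv.apply_symm_apply] at this
      exact this.symm
    · rw [hg0inv_not p hp, hvzero p hp, hwzero p hp]
  intro i
  apply Subtype.ext
  funext p
  exact congrFun (key p) i

lemma actGH_mul (g1 g2 : ↥Ggrp) (h : ↥Hgrp) :
    actGH (g1 * g2) h = actGH g1 (actGH g2 h) := by
  apply Subtype.ext
  funext p
  show (h : (ℕ × ℕ) → ZMod 2) ((↑(g1 * g2) : Equiv.Perm (ℕ × ℕ))⁻¹ p) =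
    (h : (ℕ × ℕ) → ZMod 2) ((↑g2 : Equiv.Perm (ℕ × ℕ))⁻¹ ((↑g1 : Equiv.Perm (ℕ × ℕ))⁻¹ p))
  exact congrArg _ (by simp [mul_inv_rev])

lemma actGH_one (h : ↥Hgrp) : actGH 1 h = h := by
  apply Subtype.ext
  funext p
  show (h : (ℕ × ℕ) → ZMod 2) ((↑(1 : ↥Ggrp) : Equiv.Perm (ℕ × ℕ))⁻¹ p) = _
  simp

lemma actGH_inv_cancel (g : ↥Ggrp) (h h' : ↥Hgrp) (hh : actGH g h = h') :
    actGH g⁻¹ h' = h := by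
  rw [← hh, ← actGH_mul, inv_mul_cancel, actGH_one]

end SmallAux
/-- The pair `(H,G)`, with `G` acting on `H` by `g • h = h ∘ g⁻¹`, is
small: for every `n < ω` there are only countably many orbits on `Hⁿ` under the diagonal
action of `G`; equivalently, for every finite subset `A ⊆ H` there are only countably many
orbits on `H` under the pointwise stabilizer `G_A`. -/
theorem statement15 :
    (∀ n : ℕ,
      Countable {o : Set (Fin n → ↥Hgrp) | ∃ v : Fin n → ↥Hgrp,
        o = {w | ∃ g : ↥Ggrp, (fun i => actGH g (v i)) = w}}) ∧
    (∀ A : Finset ↥Hgrp,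
      Countable {o : Set ↥Hgrp | ∃ v : ↥Hgrp,
        o = {w | ∃ g : ↥Ggrp, (∀ a ∈ A, actGH g a = a) ∧ actGH g v = w}}) := by
  constructor
  · intro n
    set Orb := {o : Set (Fin n → ↥Hgrp) | ∃ v : Fin n → ↥Hgrp,
        o = {w | ∃ g : ↥Ggrp, (fun i => actGH g (v i)) = w}} with hOrb
    have hF : Function.Injective
        (fun o : ↥Orb => invar (Classical.choose o.2)) := by
      rintro o1 o2 heq
      have hv1 := Classical.choose_spec o1.2
      have hv2 := Classical.choose_spec o2.2
      set v1 := Classical.choose o1.2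
      set v2 := Classical.choose o2.2
      obtain ⟨g, hg⟩ := exists_g v1 v2 heq
      apply Subtype.ext
      rw [hv1, hv2]
      ext u
      constructor
      · rintro ⟨g', rfl⟩
        refine ⟨g' * g⁻¹, ?_⟩
        funext i
        rw [actGH_mul]
        congr 1
        exact actGH_inv_cancel g (v1 i) (v2 i) (hg i)
      · rintro ⟨g', rfl⟩
        refine ⟨g' * g, ?_⟩
        funext i
        rw [actGH_mul, hg i]
    exact hF.countable
  · intro A
    set Orb := {o : Set ↥Hgrp | ∃ v : ↥Hgrp,
        o = {w | ∃ g : ↥Ggrp, (∀ a ∈ A, actGH g a = a) ∧ actGH g v = w}} with hOrb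
    let t : ↥Hgrp → (Option {x // x ∈ A} → ↥Hgrp) := fun v o => o.elim v (fun a => a.1)
    have hF : Function.Injective
        (fun o : ↥Orb => invar (t (Classical.choose o.2))) := by
      rintro o1 o2 heq
      have hv1 := Classical.choose_spec o1.2
      have hv2 := Classical.choose_spec o2.2
      set v1 := Classical.choose o1.2
      set v2 := Classical.choose o2.2
      obtain ⟨g, hg⟩ := exists_g (t v1) (t v2) heq
      have hgA : ∀ a ∈ A, actGH g a = a := fun a ha => hg (some ⟨a, ha⟩)
      have hgv : actGH g v1 = v2 := hg none
      apply Subtype.ext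
      rw [hv1, hv2]
      ext u
      constructor
      · rintro ⟨g', hg'A, rfl⟩
        refine ⟨g' * g⁻¹, fun a ha => ?_, ?_⟩
        · rw [actGH_mul, actGH_inv_cancel g a a (hgA a ha), hg'A a ha]
        · rw [actGH_mul, actGH_inv_cancel g v1 v2 hgv]
      · rintro ⟨g', hg'A, rfl⟩
        refine ⟨g' * g, fun a ha => ?_, ?_⟩
        · rw [actGH_mul, hgA a ha, hg'A a ha]
        · rw [actGH_mul, hgv]
    exact hF.countable
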